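/- For every integer k ≥ 2, det A^{(k−1)}_{k,1} = (−1)^{k+1} (k−1)! ((k−2)! (k−3)! ⋯ 2! · 1!)², i.e. the determinant of the submatrix obtained from A^{(k−1)} by deleting the k-th row and the 1st column equals (−1)^{k+1}(k−1)! times the square of ∏_{j=1}^{k−2} j!. -/

import Mathlib

open Matrix Finset

lemma nat_key (i k : ℕ) : i.choose k * (i+1).factorial * k.factorial
    = (i+1).choose (k+1) * i.factorial * (k+1).factorial := by
  have h := Nat.add_one_mul_choose_eq i k
  rw [Nat.factorial_succ (i), Nat.factorial_succ k]
  calc i.choose k * ((i+1)*i.factorial) * k.factorial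
      = ((i+1) * i.choose k) * (i.factorial * k.factorial) := by ring
    _ = ((i+1).choose (k+1) * (k+1)) * (i.factorial * k.factorial) := by
        rw [← h]
    _ = (i+1).choose (k+1) * i.factorial * ((k+1)*k.factorial) := by ring

lemma key_real (i k : ℕ) : (i.choose k : ℝ) * (i+1).factorial * k.factorial
    = ((i+1).choose (k+1) : ℝ) * i.factorial * (k+1).factorial := by
  exact_mod_cast congrArg (Nat.cast : ℕ → ℝ) (nat_key i k)

lemma term_eq (i j k : ℕ) :
    ((i.choose k : ℝ) * (i+1).factorial / (k+1).factorial)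
      * ((k.factorial : ℝ) * (k+1).factorial)
      * ((j.choose k : ℝ) * (j+1).factorial / (k+1).factorial)
    = (((i+1).choose (k+1) * j.choose k * i.factorial * (j+1).factorial : ℕ) : ℝ) := by
  have h : ((k+1).factorial : ℝ) ≠ 0 := by positivity
  push_cast
  field_simp
  linear_combination (j.choose k : ℝ) * key_real i k

lemma vand (n i j : ℕ) (hj : j ≤ n) :
    ∑ k ∈ range (n+1), (i+1).choose (k+1) * j.choose k = (i+j+1).choose (j+1) := by
  have h1 : i + j + 1 = (i+1) + j := by ring
  rw [h1, Nat.add_choose_eq, Finset.Nat.sum_antidiagonal_eq_sum_range_succ_mk]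
  conv_rhs => rw [Finset.sum_range_succ']
  have h0 : (i+1).choose 0 * j.choose (j+1-0) = 0 := by
    simp [Nat.choose_succ_self]
  rw [h0, add_zero]
  have h2 : ∀ k ∈ range (j+1), (i+1).choose (k+1) * j.choose (j+1-(k+1))
      = (i+1).choose (k+1) * j.choose k := by
    intro k hk
    rw [Nat.succ_sub_succ, Nat.choose_symm (by simpa using Nat.lt_succ_iff.mp (mem_range.mp hk))]
  rw [Finset.sum_congr rfl h2]
  exact (Finset.sum_subset (by simp; omega) (fun k _ hk => by
    have : j < k := by simp at hk; omega
    simp [Nat.choose_eq_zero_of_lt this])).symm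


lemma entry_sum (n i j : ℕ) (hj : j ≤ n) :
    ∑ k ∈ range (n+1),
      ((i.choose k : ℝ) * (i+1).factorial / (k+1).factorial)
        * ((k.factorial : ℝ) * (k+1).factorial)
        * ((j.choose k : ℝ) * (j+1).factorial / (k+1).factorial)
    = ((i+j+1).factorial : ℝ) := by
  have : ∀ k ∈ range (n+1),
      ((i.choose k : ℝ) * (i+1).factorial / (k+1).factorial)
        * ((k.factorial : ℝ) * (k+1).factorial)
        * ((j.choose k : ℝ) * (j+1).factorial / (k+1).factorial)
      = (((i+1).choose (k+1) * j.choose k * i.factorial * (j+1).factorial : ℕ) : ℝ) :=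
    fun k _ => term_eq i j k
  rw [Finset.sum_congr rfl this, ← Nat.cast_sum]
  norm_cast
  calc ∑ k ∈ range (n+1), (i+1).choose (k+1) * j.choose k * i.factorial * (j+1).factorial
      = (∑ k ∈ range (n+1), (i+1).choose (k+1) * j.choose k) * (i.factorial * (j+1).factorial) := by
        rw [Finset.sum_mul]; exact Finset.sum_congr rfl fun k _ => by ring
    _ = (i+j+1).choose (j+1) * (i.factorial * (j+1).factorial) := by rw [vand n i j hj]
    _ = (i+j+1).choose (j+1) * (j+1).factorial * ((i+j+1) - (j+1)).factorial := by
        have h : (i+j+1) - (j+1) = i := by omega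
        rw [h]; ring
    _ = (i+j+1).factorial := Nat.choose_mul_factorial_mul_factorial (by omega)

lemma prod_d (n : ℕ) : ∏ k ∈ range (n+1), (k.factorial * (k+1).factorial)
    = (n+1).factorial * (∏ j ∈ Icc 1 n, j.factorial)^2 := by
  induction n with
  | zero => simp
  | succ m ih =>
      rw [Finset.prod_range_succ, ih, Finset.prod_Icc_succ_top (by omega)]
      rw [Nat.factorial_succ (m+1)]
      ring

theorem det_minor_last_row_first_col (n : ℕ) :
    letI A : Matrix (Fin (n + 2)) (Fin (n + 2)) ℝ :=
      fun i j => (-1 : ℝ) ^ (i.1 + j.1) * ((i.1 + j.1).factorial : ℝ)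
    (A.submatrix (Fin.last (n + 1)).succAbove (0 : Fin (n + 2)).succAbove).det
      = (-1 : ℝ) ^ ((n + 2) + 1) * (((n + 1).factorial : ℝ))
          * (∏ j ∈ Finset.Icc 1 n, (j.factorial : ℝ)) ^ 2 := by
  set L : Matrix (Fin (n+1)) (Fin (n+1)) ℝ :=
    fun i k => (i.1.choose k.1 : ℝ) * (i.1+1).factorial / (k.1+1).factorial with hL
  set d : Fin (n+1) → ℝ := fun k => (k.1.factorial : ℝ) * (k.1+1).factorial with hd
  set e : Fin (n+1) → ℝ := fun i => (-1 : ℝ)^(i.1+1) with he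
  set e' : Fin (n+1) → ℝ := fun j => (-1 : ℝ)^(j.1) with he'
  have hM : (Matrix.submatrix (fun i j => (-1 : ℝ) ^ (i.1 + j.1) * ((i.1 + j.1).factorial : ℝ))
        (Fin.last (n + 1)).succAbove (0 : Fin (n + 2)).succAbove)
      = diagonal e * (L * diagonal d * Lᵀ) * diagonal e' := by
    ext i j
    rw [Matrix.mul_apply]
    have hsum : ∀ k, (diagonal e * (L * diagonal d * Lᵀ)) i k * diagonal e' k j
        = e i * ((L * diagonal d * Lᵀ) i k) * diagonal e' k j := by
      intro k; rw [Matrix.diagonal_mul]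
    simp only [hsum]
    rw [Finset.sum_eq_single j (fun k _ hk => by rw [diagonal_apply_ne _ hk, mul_zero])
      (by simp)]
    rw [diagonal_apply_eq]
    have hLDL : (L * diagonal d * Lᵀ) i j = ∑ k, L i k * d k * L j k := by
      rw [Matrix.mul_apply]
      exact Finset.sum_congr rfl fun k _ => by rw [Matrix.mul_diagonal, transpose_apply]
    rw [hLDL]
    have hsum2 : (∑ k : Fin (n+1), L i k * d k * L j k) = ((i.1 + j.1 + 1).factorial : ℝ) := by
      rw [Fin.sum_univ_eq_sum_range (fun k => ((i.1.choose k : ℝ) * (i.1+1).factorial / (k+1).factorial) * ((k.factorial : ℝ) * (k+1).factorial) * ((j.1.choose k : ℝ) * (j.1+1).factorial / (k+1).factorial))]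
      exact entry_sum n i.1 j.1 (by omega)
    rw [hsum2]
    simp only [submatrix, of_apply, Fin.succAbove_last, Fin.succAbove_zero]
    simp only [Fin.coe_castSucc, Fin.val_succ, he, he']
    rw [show i.1 + (j.1 + 1) = i.1 + j.1 + 1 by ring]
    have hpow : (-1:ℝ)^(i.1+j.1+1) = (-1:ℝ)^(i.1+1) * (-1:ℝ)^(j.1) := by
      rw [← pow_add]; congr 1; ring
    rw [hpow]; ring
  rw [hM]
  simp only [det_mul, det_transpose, det_diagonal]
  have hdetL : L.det = 1 := by
    have ht : L.BlockTriangular OrderDual.toDual := by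
      intro i j hij
      have : i.1 < j.1 := hij
      simp [hL, Nat.choose_eq_zero_of_lt this]
    rw [Matrix.det_of_lowerTriangular L ht]
    have : ∀ i : Fin (n+1), L i i = 1 := by
      intro i
      simp only [hL, Nat.choose_self, Nat.cast_one, one_mul]
      exact div_self (by positivity)
    simp [this]
  rw [hdetL]
  have hsign : (∏ i : Fin (n+1), e i) * (∏ i : Fin (n+1), e' i) = (-1 : ℝ)^(n+1) := by
    rw [← Finset.prod_mul_distrib]
    have : ∀ i : Fin (n+1), e i * e' i = -1 := by
      intro i; simp only [he, he']
      rw [← pow_add]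
      exact Odd.neg_one_pow ⟨i.1, by ring⟩
    simp [this]
  have hprodd : (∏ k : Fin (n+1), d k)
      = ((n+1).factorial : ℝ) * ((∏ j ∈ Finset.Icc 1 n, (j.factorial : ℝ)))^2 := by
    rw [Fin.prod_univ_eq_prod_range (fun k => ((k.factorial : ℝ) * (k+1).factorial))]
    have := prod_d n
    have hcast : (∏ k ∈ range (n+1), ((k.factorial : ℝ) * (k+1).factorial))
        = ((∏ k ∈ range (n+1), (k.factorial * (k+1).factorial) : ℕ) : ℝ) := by push_cast; rfl
    rw [hcast, this]
    push_cast
    ring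
  have : (∏ i : Fin (n+1), e i) * (1 * (∏ k : Fin (n+1), d k) * 1) * (∏ i : Fin (n+1), e' i)
      = ((∏ i : Fin (n+1), e i) * (∏ i : Fin (n+1), e' i)) * (∏ k : Fin (n+1), d k) := by ring
  rw [this, hsign, hprodd, show n+2+1 = (n+1)+2 by ring, pow_add]
  ring
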